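/- If (𝒞, 𝒦) is a connective island domain and 𝒮 is a system of pre-islands corresponding to (𝒞, 𝒦), then |𝒮| ≤ |U|. -/

import Mathlib

open Finset

variable {U : Type*}

/-- `K` covers `S` in the poset `(𝒦, ⊆)`. -/
def Covers (𝒦 : Finset (Finset U)) (S K : Finset U) : Prop :=
  S ⊂ K ∧ ∀ K' ∈ 𝒦, S ⊂ K' → ¬K' ⊂ K

/-- `min h(K) < min h(S)` (for nonempty finite `S`, `K`). -/
def MinLt (h : U → ℝ) (K S : Finset U) : Prop :=
  ∃ k ∈ K, ∀ s ∈ S, h k < h s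

/-- `S` is a pre-island with respect to `(𝒞, 𝒦, h)`. -/
def IsPreIsland (𝒞 𝒦 : Finset (Finset U)) (h : U → ℝ) (S : Finset U) : Prop :=
  S ∈ 𝒞 ∧ S.Nonempty ∧ ∀ K ∈ 𝒦, Covers 𝒦 S K → MinLt h K S

/-- `S` is an island with respect to `(𝒞, 𝒦, h)`. -/
def IsIsland [DecidableEq U] (𝒞 𝒦 : Finset (Finset U)) (h : U → ℝ) (S : Finset U) : Prop :=
  S ∈ 𝒞 ∧ S.Nonempty ∧ ∀ K ∈ 𝒦, Covers 𝒦 S K → ∀ u ∈ K \ S, ∀ s ∈ S, h u < h s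

/-- `(𝒞, 𝒦)` is an island domain on `U`. -/
def IslandDomain [Fintype U] (𝒞 𝒦 : Finset (Finset U)) : Prop :=
  𝒞 ⊆ 𝒦 ∧ Finset.univ ∈ 𝒞

/-- `ℋ` is admissible with respect to `(𝒞, 𝒦)`. -/
def Admissible [DecidableEq U] [Fintype U] (𝒞 𝒦 ℋ : Finset (Finset U)) : Prop :=
  ℋ ⊆ 𝒞 ∧ (∅ : Finset U) ∉ ℋ ∧ Finset.univ ∈ ℋ ∧
    ∀ 𝒜 ⊆ ℋ, 𝒜.Nonempty → (∀ A ∈ 𝒜, ∀ B ∈ 𝒜, A ⊆ B → A = B) →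
      ∃ H ∈ 𝒜, ∀ K ∈ 𝒦, H ⊂ K → ¬K ⊆ 𝒜.sup id

/-- `𝒮` is the system of pre-islands corresponding to `(𝒞, 𝒦, h)` for some `h`. -/
def IsSystemOfPreIslands (𝒞 𝒦 𝒮 : Finset (Finset U)) : Prop :=
  ∃ h : U → ℝ, ∀ S, S ∈ 𝒮 ↔ IsPreIsland 𝒞 𝒦 h S

/-- `𝒮` is the system of islands corresponding to `(𝒞, 𝒦, h)` for some `h`. -/
def IsSystemOfIslands [DecidableEq U] (𝒞 𝒦 𝒮 : Finset (Finset U)) : Prop :=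
  ∃ h : U → ℝ, ∀ S, S ∈ 𝒮 ↔ IsIsland 𝒞 𝒦 h S

/-- `(𝒞, 𝒦)` is a connective island domain. -/
def Connective [DecidableEq U] (𝒞 𝒦 : Finset (Finset U)) : Prop :=
  ∀ A ∈ 𝒞, ∀ B ∈ 𝒞, (A ∩ B).Nonempty → ¬B ⊆ A → ∃ K ∈ 𝒦, A ⊂ K ∧ K ⊆ A ∪ B

/-- Any two members are comparable or disjoint. -/
def CDIndependent [DecidableEq U] (ℋ : Finset (Finset U)) : Prop :=
  ∀ A ∈ ℋ, ∀ B ∈ ℋ, A ⊆ B ∨ B ⊆ A ∨ A ∩ B = ∅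

def WeaklyIndependent [DecidableEq U] (ℋ : Finset (Finset U)) : Prop :=
  ∀ H ∈ ℋ, ∀ 𝒢 ⊆ ℋ, 𝒢.Nonempty → H ⊆ 𝒢.sup id → ∃ G ∈ 𝒢, H ⊆ G

def CDWIndependent [DecidableEq U] (ℋ : Finset (Finset U)) : Prop :=
  CDIndependent ℋ ∧ WeaklyIndependent ℋ

/-- The proximity relation `δ`: `A δ B` iff some `K ∈ 𝒦` with `A ⪯ K` meets `B`. -/
def Delta [DecidableEq U] (𝒦 : Finset (Finset U)) (A B : Finset U) : Prop :=
  ∃ K ∈ 𝒦, (K = A ∨ Covers 𝒦 A K) ∧ (K ∩ B).Nonempty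

def Distant [DecidableEq U] (𝒦 : Finset (Finset U)) (A B : Finset U) : Prop :=
  ¬Delta 𝒦 A B ∧ ¬Delta 𝒦 B A

/-- Any two incomparable members of `ℋ` are distant. -/
def DistantFamily [DecidableEq U] (𝒦 ℋ : Finset (Finset U)) : Prop :=
  ∀ A ∈ ℋ, ∀ B ∈ ℋ, ¬A ⊆ B → ¬B ⊆ A → Distant 𝒦 A B

/-- A proximity domain: connective and `δ` symmetric on nonempty members of `𝒞`. -/
def ProximityDomain [DecidableEq U] (𝒞 𝒦 : Finset (Finset U)) : Prop :=
  Connective 𝒞 𝒦 ∧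
    ∀ A ∈ 𝒞, ∀ B ∈ 𝒞, A.Nonempty → B.Nonempty → (Delta 𝒦 A B ↔ Delta 𝒦 B A)

/-- From any `K ∈ 𝒦` with `S ⊂ K ⊆ W` we can find a cover of `S` inside `W`. -/
lemma exists_cover_subset [DecidableEq U] (𝒦 : Finset (Finset U)) {S W : Finset U}
    (hne : ∃ K ∈ 𝒦, S ⊂ K ∧ K ⊆ W) : ∃ K ∈ 𝒦, Covers 𝒦 S K ∧ K ⊆ W := by
  classical
  set 𝒜 := 𝒦.filter (fun K => S ⊂ K ∧ K ⊆ W) with h𝒜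
  have h𝒜ne : 𝒜.Nonempty := by
    obtain ⟨K, hK, h1, h2⟩ := hne
    exact ⟨K, by simp [h𝒜, hK, h1, h2]⟩
  obtain ⟨K, hK, hmin⟩ := 𝒜.exists_minimal h𝒜ne
  simp only [h𝒜, Finset.mem_filter] at hK
  refine ⟨K, hK.1, ⟨hK.2.1, ?_⟩, hK.2.2⟩
  intro K' hK' hSK' hK'K
  exact hK'K.2 (hmin (by simp [h𝒜, hK', hSK', hK'K.subset.trans hK.2.2]) hK'K.subset)

/-- A CDW-independent family of nonempty sets has at most `|sup|` members. -/
lemma cdw_card_le [DecidableEq U] :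
    ∀ n (ℋ : Finset (Finset U)), ℋ.card ≤ n → CDIndependent ℋ → WeaklyIndependent ℋ →
      (∀ H ∈ ℋ, H.Nonempty) → ℋ.card ≤ (ℋ.sup id).card := by
  intro n
  induction n with
  | zero =>
      intro ℋ hcard _ _ _
      omega
  | succ m ih =>
      intro ℋ hcard hcd hw hne
      rcases ℋ.eq_empty_or_nonempty with rfl | hℋne
      · simp
      obtain ⟨M, hM, hMmax⟩ := ℋ.exists_maximal hℋne
      classical
      set ℋ₁ := ℋ.filter (fun H => H ⊆ M) with hℋ₁
      set ℋ₂ := ℋ.filter (fun H => ¬ H ⊆ M) with hℋ₂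
      have hsplit : ℋ₁.card + ℋ₂.card = ℋ.card :=
        Finset.card_filter_add_card_filter_not (fun H => H ⊆ M)
      have hMmem₁ : M ∈ ℋ₁ := by simp [hℋ₁, hM]
      -- subfamilies inherit the hypotheses
      have hcd₂ : CDIndependent ℋ₂ := fun A hA B hB =>
        hcd A (Finset.mem_filter.mp hA).1 B (Finset.mem_filter.mp hB).1
      have hw₂ : WeaklyIndependent ℋ₂ := fun H hH 𝒢 h𝒢 =>
        hw H (Finset.mem_filter.mp hH).1 𝒢 (h𝒢.trans (Finset.filter_subset _ _))
      have hne₂ : ∀ H ∈ ℋ₂, H.Nonempty := fun H hH =>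
        hne H (Finset.mem_filter.mp hH).1
      have hcard₂ : ℋ₂.card ≤ m := by
        have h2sub : ℋ₂ ⊂ ℋ := by
          refine ⟨Finset.filter_subset _ _, fun hsub => ?_⟩
          have := Finset.mem_filter.mp (hsub hM)
          exact this.2 (subset_refl M)
        have := Finset.card_lt_card h2sub
        omega
      have ih₂ := ih ℋ₂ hcard₂ hcd₂ hw₂ hne₂
      -- ℋ₁ without M
      set 𝒢 := ℋ₁.erase M with h𝒢
      have h𝒢sub : 𝒢 ⊆ ℋ := (Finset.erase_subset _ _).trans (Finset.filter_subset _ _)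
      have hcard₁ : ℋ₁.card = 𝒢.card + 1 := by
        rw [h𝒢, Finset.card_erase_of_mem hMmem₁]
        have : 1 ≤ ℋ₁.card := Finset.card_pos.mpr ⟨M, hMmem₁⟩
        omega
      have hcard𝒢 : 𝒢.card ≤ m := by
        have : ℋ₁.card ≤ ℋ.card := Finset.card_le_card (Finset.filter_subset _ _)
        omega
      have ih𝒢 := ih 𝒢 hcard𝒢 (fun A hA B hB => hcd A (h𝒢sub hA) B (h𝒢sub hB))
        (fun H hH 𝒢' h𝒢' => hw H (h𝒢sub hH) 𝒢' (h𝒢'.trans h𝒢sub))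
        (fun H hH => hne H (h𝒢sub hH))
      -- the union of 𝒢 is a proper subset of M (if 𝒢 nonempty)
      have h𝒢supM : 𝒢.sup id ⊆ M := by
        have : 𝒢.sup id ≤ M := Finset.sup_le fun G hG =>
          (Finset.mem_filter.mp (Finset.mem_of_mem_erase hG)).2
        exact this
      have hℋ₁card : ℋ₁.card ≤ M.card := by
        rcases 𝒢.eq_empty_or_nonempty with h𝒢e | h𝒢ne
        · rw [hcard₁, h𝒢e]
          simpa using Finset.card_pos.mpr (hne M hM)
        · have hproper : 𝒢.sup id ⊂ M := by
            refine ⟨h𝒢supM, fun hMsub => ?_⟩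
            obtain ⟨G, hG, hMG⟩ := hw M hM 𝒢 h𝒢sub h𝒢ne hMsub
            have hGM : G ⊆ M := (Finset.mem_filter.mp (Finset.mem_of_mem_erase hG)).2
            have : G = M := subset_antisymm hGM hMG
            exact (Finset.ne_of_mem_erase hG) this
          have := Finset.card_lt_card hproper
          omega
      -- M is disjoint from sup ℋ₂
      have hdisj : Disjoint M (ℋ₂.sup id) := by
        rw [Finset.disjoint_sup_right]
        intro H hH
        obtain ⟨hHℋ, hHM⟩ := Finset.mem_filter.mp hH
        have hMH : ¬ M ⊆ H := by
          intro hMH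
          rcases eq_or_ne M H with rfl | hne'
          · exact hHM hMH
          · exact (ssubset_of_subset_of_ne hMH hne').2 (hMmax hHℋ hMH)
        rcases hcd M hM H hHℋ with h | h | h
        · exact absurd h hMH
        · exact absurd h hHM
        · exact Finset.disjoint_left.mpr fun a haM haH =>
            (Finset.notMem_empty a) (h ▸ Finset.mem_inter.mpr ⟨haM, haH⟩)
      have hunion : M ∪ ℋ₂.sup id ⊆ ℋ.sup id := by
        refine Finset.union_subset (Finset.le_sup (f := id) hM) ?_
        have : ℋ₂.sup id ≤ ℋ.sup id := Finset.sup_mono (Finset.filter_subset _ _)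
        exact this
      calc ℋ.card = ℋ₁.card + ℋ₂.card := hsplit.symm
        _ ≤ M.card + (ℋ₂.sup id).card := add_le_add hℋ₁card ih₂
        _ = (M ∪ ℋ₂.sup id).card := (Finset.card_union_of_disjoint hdisj).symm
        _ ≤ (ℋ.sup id).card := Finset.card_le_card hunion

/-- in a connective island domain, a system of pre-islands has at most `|U|` members. -/
theorem system_card_le [Fintype U] [DecidableEq U] [Nonempty U]
    (𝒞 𝒦 𝒮 : Finset (Finset U)) (hdom : IslandDomain 𝒞 𝒦)
    (hconn : Connective 𝒞 𝒦) (h𝒮 : IsSystemOfPreIslands 𝒞 𝒦 𝒮) :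
    𝒮.card ≤ Fintype.card U := by
  classical
  obtain ⟨h, hh⟩ := h𝒮
  -- key: a pre-island properly inside another contains no minimum of the bigger one
  have key : ∀ S ∈ 𝒮, ∀ T ∈ 𝒮, (S ∩ T).Nonempty → ¬ T ⊆ S →
      ∃ k ∈ T, ∀ s ∈ S, h k < h s := by
    intro S hS T hT hint hTS
    obtain ⟨hSC, hSne, hSpre⟩ := (hh S).mp hS
    obtain ⟨hTC, _, _⟩ := (hh T).mp hT
    obtain ⟨K, hK, hSK, hKsub⟩ := hconn S hSC T hTC hint hTS
    obtain ⟨K', hK', hcov, hK'sub⟩ := exists_cover_subset 𝒦 ⟨K, hK, hSK, hKsub⟩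
    obtain ⟨k, hkK', hk⟩ := hSpre K' hK' hcov
    have hkS : k ∉ S := fun hkS => lt_irrefl _ (hk k hkS)
    have : k ∈ S ∪ T := hK'sub hkK'
    rcases Finset.mem_union.mp this with h' | h'
    · exact absurd h' hkS
    · exact ⟨k, h', hk⟩
  -- CD-independence
  have hcd : CDIndependent 𝒮 := by
    intro A hA B hB
    by_contra hcon
    push_neg at hcon
    obtain ⟨hAB, hBA, hABne⟩ := hcon
    have hint : (A ∩ B).Nonempty := hABne
    have hint' : (B ∩ A).Nonempty := by rwa [Finset.inter_comm]
    obtain ⟨a, haB, ha⟩ := key A hA B hB hint hBA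
    obtain ⟨b, hbA, hb⟩ := key B hB A hA hint' hAB
    exact absurd (ha b hbA) (not_lt.mpr (le_of_lt (hb a haB)))
  -- weak independence
  have hw : WeaklyIndependent 𝒮 := by
    intro S hS 𝒢 h𝒢 h𝒢ne hSsup
    by_contra hcon
    push_neg at hcon
    obtain ⟨_, hSne, _⟩ := (hh S).mp hS
    -- the min of S lies in some G ∈ 𝒢, which must be a proper subset of S
    obtain ⟨s₀, hs₀S, hs₀min⟩ := S.exists_min_image h hSne
    obtain ⟨G, hG, hs₀G⟩ := Finset.mem_sup.mp (hSsup hs₀S)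
    rw [id] at hs₀G
    have hGS : G ⊆ S := by
      rcases hcd G (h𝒢 hG) S hS with h' | h' | h'
      · exact h'
      · exact absurd h' (hcon G hG)
      · exact absurd (h' ▸ Finset.mem_inter.mpr ⟨hs₀G, hs₀S⟩) (Finset.notMem_empty s₀)
    have hSG : ¬ S ⊆ G := hcon G hG
    have hint : (G ∩ S).Nonempty := ⟨s₀, Finset.mem_inter.mpr ⟨hs₀G, hs₀S⟩⟩
    obtain ⟨k, hkS, hk⟩ := key G (h𝒢 hG) S hS hint hSG
    exact absurd (hk s₀ hs₀G) (not_lt.mpr (hs₀min k hkS))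
  have hne : ∀ H ∈ 𝒮, H.Nonempty := fun H hH => ((hh H).mp hH).2.1
  calc 𝒮.card ≤ (𝒮.sup id).card := cdw_card_le 𝒮.card 𝒮 le_rfl hcd hw hne
    _ ≤ Fintype.card U := Finset.card_le_univ _
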